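/- arXiv:1408.1269 — 4 statements merged into one kernel-verified Lean document; each statement's English description precedes it below -/
import Mathlib

section
/- Let α be a proper fraction, u a sequence of nonzero scalars, and y any sequence (with y_{-1} = 0). Define x_k = Σ_{i=0}^{k} (-1)^i [Γ(1-α)/(i!·Γ(1-α-i))] (y_{k-i} - y_{k-i-1})/u_{k-i}. Then Σ_{j=0}^{k} u_j (Δ^{(α)}x)_j = y_k for all k. -/
open Finset Filter Topology

/-- Coefficient of the fractional difference operator `Δ^{(α)}`. -/
noncomputable def fracCoeff (α : ℝ) (i : ℕ) : ℝ :=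
  (-1) ^ i * Real.Gamma (α + 1) / ((i.factorial : ℝ) * Real.Gamma (α + 1 - i))

/-- Fractional backward difference operator `Δ^{(α)}` (with `x_m = 0` for `m < 0`). -/
noncomputable def fracDiff (α : ℝ) (x : ℕ → ℝ) (j : ℕ) : ℝ :=
  ∑ i ∈ Finset.range (j + 1), fracCoeff α i * x (j - i)

/-- The `Δ_u^{(α)}(Γ)`-transform of a sequence: `y_k = Σ_{j=0}^k u_j (Δ^{(α)}x)_j`. -/
noncomputable def gammaTransform (α : ℝ) (u x : ℕ → ℝ) (k : ℕ) : ℝ :=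
  ∑ j ∈ Finset.range (k + 1), u j * fracDiff α x j

lemma fracCoeff_zero (β : ℝ) (hβ : Real.Gamma (β + 1) ≠ 0) : fracCoeff β 0 = 1 := by
  simp [fracCoeff, div_self, hβ]

lemma fracCoeff_succ (β : ℝ) (hβ : ∀ n : ℤ, β ≠ n) (i : ℕ) :
    ((i : ℝ) + 1) * fracCoeff β (i + 1) = ((i : ℝ) - β) * fracCoeff β i := by
  have h1 : β - i ≠ 0 := by
    intro h
    apply hβ (i : ℤ)
    push_cast
    linarith
  have h2 : Real.Gamma (β - i) ≠ 0 := by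
    apply Real.Gamma_ne_zero
    intro m hm
    exact hβ ((i : ℤ) - m) (by push_cast; linarith)
  have h3 : Real.Gamma (β + 1 - i) ≠ 0 := by
    apply Real.Gamma_ne_zero
    intro m hm
    exact hβ ((i : ℤ) - m - 1) (by push_cast; linarith)
  have e1 : β + 1 - (i + 1 : ℕ) = β - i := by push_cast; ring
  have e2 : β + 1 - (i : ℕ) = (β - i) + 1 := by ring
  have e3 : Real.Gamma (β + 1 - i) = (β - i) * Real.Gamma (β - i) := by
    rw [e2, Real.Gamma_add_one h1]
  have hfac : ((i.factorial : ℝ)) ≠ 0 := Nat.cast_ne_zero.mpr i.factorial_ne_zero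
  unfold fracCoeff
  rw [e1, e3, Nat.factorial_succ]
  push_cast
  field_simp
  ring

/-- The convolution of `fracCoeff α` and `fracCoeff (-α)` is the Kronecker delta. -/
lemma fracCoeff_conv (α : ℝ) (hα : 0 < α) (hα1 : α < 1) (n : ℕ) :
    (∑ i ∈ Finset.range (n + 1), fracCoeff α i * fracCoeff (-α) (n - i)) =
      if n = 0 then 1 else 0 := by
  have hαZ : ∀ m : ℤ, α ≠ m := by
    intro m hm
    rcases lt_trichotomy m 0 with h | h | h
    · have : (m : ℝ) ≤ 0 := by exact_mod_cast h.le
      linarith [hm ▸ hα]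
    · subst h; simp at hm; linarith [hm ▸ hα]
    · have : (1 : ℝ) ≤ (m : ℝ) := by exact_mod_cast h
      linarith [hm ▸ hα1]
  have hnegZ : ∀ m : ℤ, -α ≠ m := fun m hm => hαZ (-m) (by push_cast; linarith)
  set a : ℕ → ℝ := fracCoeff α with ha
  set b : ℕ → ℝ := fracCoeff (-α) with hb
  set S : ℕ → ℝ := fun n => ∑ i ∈ Finset.range (n + 1), a i * b (n - i) with hS
  have hra : ∀ i : ℕ, ((i : ℝ) + 1) * a (i + 1) = ((i : ℝ) - α) * a i :=
    fracCoeff_succ α hαZ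
  have hrb : ∀ i : ℕ, ((i : ℝ) + 1) * b (i + 1) = ((i : ℝ) + α) * b i := by
    intro i
    have := fracCoeff_succ (-α) hnegZ i
    rw [sub_neg_eq_add] at this
    exact this
  have key : ∀ m : ℕ, ((m : ℝ) + 1) * S (m + 1) = (m : ℝ) * S m := by
    intro m
    have expand : ((m : ℝ) + 1) * S (m + 1) =
        (∑ i ∈ Finset.range (m + 2), (i : ℝ) * (a i * b (m + 1 - i))) +
        (∑ i ∈ Finset.range (m + 2), ((m + 1 - i : ℕ) : ℝ) * (a i * b (m + 1 - i))) := by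
      rw [hS]
      simp only [Finset.mul_sum, ← Finset.sum_add_distrib]
      apply Finset.sum_congr rfl
      intro i hi
      have hi' : i ≤ m + 1 := Nat.lt_succ_iff.mp (Finset.mem_range.mp hi)
      have : ((m + 1 - i : ℕ) : ℝ) = (m : ℝ) + 1 - i := by
        push_cast [Nat.cast_sub hi']; ring
      rw [this]; ring
    have T1 : (∑ i ∈ Finset.range (m + 2), (i : ℝ) * (a i * b (m + 1 - i))) =
        ∑ i ∈ Finset.range (m + 1), ((i : ℝ) - α) * (a i * b (m - i)) := by
      rw [Finset.sum_range_succ' (fun i => (i : ℝ) * (a i * b (m + 1 - i))) (m + 1)]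
      simp only [Nat.cast_zero, zero_mul, add_zero]
      apply Finset.sum_congr rfl
      intro i hi
      have h1 : m + 1 - (i + 1) = m - i := by omega
      rw [h1]
      push_cast
      calc ((i : ℝ) + 1) * (a (i + 1) * b (m - i))
          = (((i : ℝ) + 1) * a (i + 1)) * b (m - i) := by ring
        _ = (((i : ℝ) - α) * a i) * b (m - i) := by rw [hra i]
        _ = ((i : ℝ) - α) * (a i * b (m - i)) := by ring
    have T2 : (∑ i ∈ Finset.range (m + 2), ((m + 1 - i : ℕ) : ℝ) * (a i * b (m + 1 - i))) =
        ∑ i ∈ Finset.range (m + 1), (((m - i : ℕ) : ℝ) + α) * (a i * b (m - i)) := by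
      rw [Finset.sum_range_succ]
      simp only [Nat.sub_self, Nat.cast_zero, zero_mul, add_zero]
      apply Finset.sum_congr rfl
      intro i hi
      have hi' : i ≤ m := Nat.lt_succ_iff.mp (Finset.mem_range.mp hi)
      have h1 : m + 1 - i = (m - i) + 1 := by omega
      rw [h1]
      calc (((m - i : ℕ) + 1 : ℕ) : ℝ) * (a i * b ((m - i) + 1))
          = ((((m - i : ℕ)) : ℝ) + 1) * b ((m - i) + 1) * a i := by push_cast; ring
        _ = (((m - i : ℕ) : ℝ) + α) * b (m - i) * a i := by rw [hrb (m - i)]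
        _ = (((m - i : ℕ) : ℝ) + α) * (a i * b (m - i)) := by ring
    rw [expand, T1, T2, ← Finset.sum_add_distrib, hS, Finset.mul_sum]
    apply Finset.sum_congr rfl
    intro i hi
    have hi' : i ≤ m := Nat.lt_succ_iff.mp (Finset.mem_range.mp hi)
    have : ((m - i : ℕ) : ℝ) = (m : ℝ) - i := by push_cast [Nat.cast_sub hi']; ring
    rw [this]; ring
  have hS0 : S 0 = 1 := by
    have hg : Real.Gamma (α + 1) ≠ 0 := by
      apply ne_of_gt; exact Real.Gamma_pos_of_pos (by linarith)
    have hg' : Real.Gamma (-α + 1) ≠ 0 := by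
      apply ne_of_gt; exact Real.Gamma_pos_of_pos (by linarith)
    simp [hS, ha, hb, fracCoeff_zero α hg, fracCoeff_zero (-α) hg']
  have hSn : ∀ m : ℕ, S (m + 1) = 0 := by
    intro m
    induction m with
    | zero =>
        have := key 0
        simp at this
        exact this
    | succ p ih =>
        have h2 := key (p + 1)
        rw [ih, mul_zero] at h2
        have hne : (((p + 1 : ℕ) : ℝ) + 1) ≠ 0 := by positivity
        exact (mul_eq_zero.mp h2).resolve_left hne
  rcases n with _ | m
  · rw [if_pos rfl]
    simpa [hS] using hS0
  · rw [if_neg (Nat.succ_ne_zero m)]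
    simpa [hS] using hSn m

/-- Triangle reindexing for double sums. -/
lemma sum_triangle (j : ℕ) (f : ℕ → ℕ → ℝ) :
    (∑ i ∈ Finset.range (j + 1), ∑ m ∈ Finset.range (j + 1 - i), f i m) =
      ∑ n ∈ Finset.range (j + 1), ∑ i ∈ Finset.range (n + 1), f i (n - i) := by
  rw [Finset.sum_sigma', Finset.sum_sigma']
  apply Finset.sum_nbij' (fun p => (⟨p.1 + p.2, p.1⟩ : Σ _ : ℕ, ℕ))
    (fun p => (⟨p.2, p.1 - p.2⟩ : Σ _ : ℕ, ℕ))
  · intro p hp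
    obtain ⟨i, m⟩ := p
    simp only [Finset.mem_sigma, Finset.mem_range] at hp ⊢
    omega
  · intro p hp
    obtain ⟨n, i⟩ := p
    simp only [Finset.mem_sigma, Finset.mem_range] at hp ⊢
    omega
  · intro p hp
    obtain ⟨i, m⟩ := p
    simp
  · intro p hp
    obtain ⟨n, i⟩ := p
    simp only [Finset.mem_sigma, Finset.mem_range] at hp
    have h3 : i + (n - i) = n := by omega
    simp only [h3]
  · intro p hp
    obtain ⟨i, m⟩ := p
    simp

theorem gamma_transform_inverse (α : ℝ) (hα : 0 < α) (hα1 : α < 1)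
    (u : ℕ → ℝ) (hu : ∀ k, u k ≠ 0) (y : ℕ → ℝ)
    (x : ℕ → ℝ)
    (hx : ∀ k, x k = ∑ i ∈ Finset.range (k + 1),
      fracCoeff (-α) i * ((y (k - i) - if k - i = 0 then 0 else y (k - i - 1)) / u (k - i))) :
    ∀ k, gammaTransform α u x k = y k := by
  set d : ℕ → ℝ := fun m => (y m - if m = 0 then 0 else y (m - 1)) / u m with hd
  have hx' : ∀ k, x k = ∑ i ∈ Finset.range (k + 1), fracCoeff (-α) i * d (k - i) := hx
  have hdiff : ∀ j, fracDiff α x j = d j := by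
    intro j
    have step1 : fracDiff α x j =
        ∑ i ∈ Finset.range (j + 1), ∑ m ∈ Finset.range (j + 1 - i),
          fracCoeff α i * (fracCoeff (-α) m * d (j - i - m)) := by
      unfold fracDiff
      apply Finset.sum_congr rfl
      intro i hi
      have hi' : i ≤ j := Nat.lt_succ_iff.mp (Finset.mem_range.mp hi)
      rw [hx' (j - i), Finset.mul_sum]
      have : j - i + 1 = j + 1 - i := by omega
      rw [this]
    rw [step1, sum_triangle j (fun i m => fracCoeff α i * (fracCoeff (-α) m * d (j - i - m)))]
    have step2 : ∀ n ∈ Finset.range (j + 1),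
        (∑ i ∈ Finset.range (n + 1),
          fracCoeff α i * (fracCoeff (-α) (n - i) * d (j - i - (n - i)))) =
        (if n = 0 then 1 else 0) * d (j - n) := by
      intro n hn
      rw [← fracCoeff_conv α hα hα1 n, Finset.sum_mul]
      apply Finset.sum_congr rfl
      intro i hi
      have hi' : i ≤ n := Nat.lt_succ_iff.mp (Finset.mem_range.mp hi)
      have : j - i - (n - i) = j - n := by omega
      rw [this]; ring
    rw [Finset.sum_congr rfl step2]
    have : (∑ n ∈ Finset.range (j + 1), (if n = 0 then 1 else 0) * d (j - n)) =
        ∑ n ∈ Finset.range (j + 1), if n = 0 then d (j - n) else 0 := by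
      apply Finset.sum_congr rfl
      intro n _
      split_ifs <;> ring
    rw [this, Finset.sum_ite_eq' (Finset.range (j + 1)) 0 (fun n => d (j - n))]
    simp
  intro k
  induction k with
  | zero =>
      unfold gammaTransform
      simp [hdiff 0, hd, div_mul_cancel₀]
      rw [mul_div_cancel₀ _ (hu 0)]
  | succ p ih =>
      unfold gammaTransform
      rw [Finset.sum_range_succ]
      have : (∑ j ∈ Finset.range (p + 1), u j * fracDiff α x j) = y p := ih
      rw [this, hdiff (p + 1), hd]
      simp only [Nat.succ_ne_zero, if_false]
      rw [mul_div_cancel₀ _ (hu (p + 1))]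
      simp
end

section
/- An infinite matrix A = (a_{nk}) maps c₀ into c (i.e., for every null sequence x, the series (Ax)_n = Σ_k a_{nk} x_k all converge and the sequence (Ax)_n converges) if and only if: (i) lim_{n→∞} a_{nk} exists for each fixed k, and (ii) sup__n Σ_k |a_{nk}| < ∞. -/
open Filter Topology ZeroAtInfty ZeroAtInftyContinuousMap

set_option maxHeartbeats 1000000

lemma abs_sign_le_one (r : ℝ) : |(SignType.sign r : ℝ)| ≤ 1 := by
  rcases SignType.sign r with _|_|_ <;> norm_num

lemma summable_abs_of_mul (a : ℕ → ℝ)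
    (h : ∀ x : ℕ → ℝ, Tendsto x atTop (𝓝 0) → Summable (fun k => a k * x k)) :
    Summable (fun k => |a k|) := by
  by_contra hns
  set S : ℕ → ℝ := fun n => ∑ k ∈ Finset.range n, |a k| with hSdef
  have hSnonneg : ∀ n, 0 ≤ S n := fun n => Finset.sum_nonneg fun k _ => abs_nonneg _
  have hSmono : Monotone S := fun m n hmn =>
    Finset.sum_le_sum_of_subset_of_nonneg (Finset.range_subset_range.2 hmn) (fun k _ _ => abs_nonneg _)
  have hStop : Tendsto S atTop atTop :=
    (not_summable_iff_tendsto_nat_atTop_of_nonneg (fun k => abs_nonneg (a k))).1 hns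
  have hpos : ∀ n, (0:ℝ) < 1 + S n := fun n => by linarith [hSnonneg n]
  set x : ℕ → ℝ := fun k => (SignType.sign (a k) : ℝ) / (1 + S (k+1)) with hxdef
  have hdenomtop : Tendsto (fun k => 1 + S (k+1)) atTop atTop :=
    tendsto_atTop_add_const_left _ 1 (hStop.comp (tendsto_add_atTop_nat 1))
  have hx : Tendsto x atTop (𝓝 0) := by
    apply squeeze_zero_norm (a := fun k => 1 / (1 + S (k+1)))
    · intro k
      rw [hxdef]
      simp only [norm_div, Real.norm_eq_abs]
      rw [abs_of_pos (hpos _)]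
      gcongr
      exact abs_sign_le_one _
    · exact hdenomtop.inv_tendsto_atTop.congr (fun k => (one_div _).symm)
  have hsum := h x hx
  -- a k * x k = |a k| / (1 + S (k+1))
  have hval : ∀ k, a k * x k = |a k| / (1 + S (k+1)) := by
    intro k
    rw [hxdef]
    rw [mul_div_assoc']
    congr 1
    exact self_mul_sign (a k)
  set g : ℕ → ℝ := fun k => |a k| / (1 + S (k+1)) with hgdef
  have hgsum : Summable g := hsum.congr hval
  have hgnonneg : ∀ k, 0 ≤ g k := fun k => div_nonneg (abs_nonneg _) (hpos _).le
  set P : ℕ → ℝ := fun n => ∑ k ∈ Finset.range n, g k with hPdef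
  have hPtend : Tendsto P atTop (𝓝 (∑' k, g k)) := hgsum.hasSum.tendsto_sum_nat
  -- key: for all m, 1 ≤ ∑' g - P m
  have hkey : ∀ m, 1 ≤ (∑' k, g k) - P m := by
    intro m
    have hf : Tendsto (fun n => 1 - (1 + S m) / (1 + S n)) atTop (𝓝 1) := by
      have : Tendsto (fun n => (1 + S m) / (1 + S n)) atTop (𝓝 0) :=
        Tendsto.div_atTop tendsto_const_nhds (tendsto_atTop_add_const_left _ 1 hStop)
      simpa using (tendsto_const_nhds (x := (1:ℝ))).sub this
    have hg' : Tendsto (fun n => P n - P m) atTop (𝓝 ((∑' k, g k) - P m)) :=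
      hPtend.sub tendsto_const_nhds
    refine le_of_tendsto_of_tendsto hf hg' ?_
    filter_upwards [eventually_ge_atTop m] with n hmn
    have hIco : P n - P m = ∑ k ∈ Finset.Ico m n, g k := by
      rw [hPdef]
      simp only
      rw [Finset.sum_Ico_eq_sub _ hmn]
    rw [hIco]
    have hterm : ∀ k ∈ Finset.Ico m n, |a k| / (1 + S n) ≤ g k := by
      intro k hk
      rw [Finset.mem_Ico] at hk
      exact div_le_div_of_nonneg_left (abs_nonneg _) (hpos _)
        (by have := hSmono (Nat.succ_le_of_lt hk.2); linarith)
    calc 1 - (1 + S m) / (1 + S n)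
        = (S n - S m) / (1 + S n) := by rw [one_sub_div (hpos n).ne']; ring
      _ = ∑ k ∈ Finset.Ico m n, |a k| / (1 + S n) := by
          rw [← Finset.sum_div]
          congr 1
          rw [hSdef]
          simp only
          rw [Finset.sum_Ico_eq_sub _ hmn]
      _ ≤ ∑ k ∈ Finset.Ico m n, g k := Finset.sum_le_sum hterm
  have : Tendsto (fun m => (∑' k, g k) - P m) atTop (𝓝 0) := by
    simpa using (tendsto_const_nhds (x := ∑' k, g k)).sub hPtend
  have h1 : (1:ℝ) ≤ 0 := ge_of_tendsto this (Eventually.of_forall hkey)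
  linarith

noncomputable def c0Mk (f : ℕ → ℝ) (hf : Tendsto f atTop (𝓝 0)) : C₀(ℕ, ℝ) where
  toFun := f
  continuous_toFun := continuous_of_discreteTopology
  zero_at_infty' := by rwa [cocompact_eq_atTop]

lemma c0_tendsto (f : C₀(ℕ, ℝ)) : Tendsto (f : ℕ → ℝ) atTop (𝓝 0) := by
  have := f.zero_at_infty'
  rwa [cocompact_eq_atTop] at this

lemma c0_norm_apply_le (f : C₀(ℕ, ℝ)) (k : ℕ) : |f k| ≤ ‖f‖ := by
  rw [← norm_toBCF_eq_norm]
  exact f.toBCF.norm_coe_le_norm k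

lemma c0_summable (a : ℕ → ℝ) (ha : Summable fun k => |a k|) (f : C₀(ℕ, ℝ)) :
    Summable (fun k => a k * f k) := by
  refine Summable.of_norm_bounded (ha.mul_right ‖f‖) (fun k => ?_)
  rw [Real.norm_eq_abs, abs_mul]
  exact mul_le_mul_of_nonneg_left (c0_norm_apply_le f k) (abs_nonneg _)

noncomputable def rowCLM (a : ℕ → ℝ) (ha : Summable fun k => |a k|) : C₀(ℕ, ℝ) →L[ℝ] ℝ :=
  LinearMap.mkContinuous
    { toFun := fun f => ∑' k, a k * f k
      map_add' := fun f g => by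
        simp only [ZeroAtInftyContinuousMap.coe_add, Pi.add_apply]
        rw [← Summable.tsum_add (c0_summable a ha f) (c0_summable a ha g)]
        exact tsum_congr fun k => by ring
      map_smul' := fun c f => by
        simp only [ZeroAtInftyContinuousMap.coe_smul, Pi.smul_apply, smul_eq_mul,
          RingHom.id_apply]
        rw [← tsum_mul_left]
        exact tsum_congr fun k => by ring }
    (∑' k, |a k|)
    (fun f => by
      simp only [LinearMap.coe_mk, AddHom.coe_mk]
      calc ‖∑' k, a k * f k‖ ≤ ∑' k, ‖a k * f k‖ :=
            norm_tsum_le_tsum_norm ((c0_summable a ha f).abs.congr fun k => rfl)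
        _ ≤ ∑' k, |a k| * ‖f‖ := by
            refine Summable.tsum_le_tsum (fun k => ?_) ((c0_summable a ha f).abs.congr fun k => rfl)
              (ha.mul_right _)
            rw [Real.norm_eq_abs, abs_mul]
            exact mul_le_mul_of_nonneg_left (c0_norm_apply_le f k) (abs_nonneg _)
        _ = (∑' k, |a k|) * ‖f‖ := tsum_mul_right)

lemma rowCLM_apply (a : ℕ → ℝ) (ha : Summable fun k => |a k|) (f : C₀(ℕ, ℝ)) :
    rowCLM a ha f = ∑' k, a k * f k := rfl

lemma c0Mk_apply (f : ℕ → ℝ) (hf : Tendsto f atTop (𝓝 0)) (k : ℕ) :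
    c0Mk f hf k = f k := rfl

lemma forward (A : ℕ → ℕ → ℝ)
    (h : ∀ x : ℕ → ℝ, Tendsto x atTop (𝓝 0) →
      (∀ n, Summable (fun k => A n k * x k)) ∧
      ∃ L, Tendsto (fun n => ∑' k, A n k * x k) atTop (𝓝 L)) :
    (∀ k, ∃ l, Tendsto (fun n => A n k) atTop (𝓝 l)) ∧
      ∃ C : ℝ, ∀ n, (Summable fun k => |A n k|) ∧ ∑' k, |A n k| ≤ C := by
  have han : ∀ n, Summable fun k => |A n k| :=
    fun n => summable_abs_of_mul (A n) (fun x hx => (h x hx).1 n)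
  constructor
  · intro k
    set x : ℕ → ℝ := fun j => if j = k then 1 else 0 with hxdef
    have hx : Tendsto x atTop (𝓝 0) := by
      refine Tendsto.congr' ?_ (tendsto_const_nhds (x := (0:ℝ)))
      filter_upwards [eventually_gt_atTop k] with j hj
      simp [hxdef, hj.ne']
    obtain ⟨L, hL⟩ := (h x hx).2
    have hval : ∀ n, ∑' j, A n j * x j = A n k := by
      intro n
      rw [show (fun j => A n j * x j) = fun j => if j = k then A n k else 0 from
        funext fun j => by by_cases hj : j = k <;> simp [hxdef, hj]]
      exact tsum_ite_eq k (fun _ => A n k)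
    exact ⟨L, hL.congr hval⟩
  · set g : ℕ → C₀(ℕ,ℝ) →L[ℝ] ℝ := fun n => rowCLM (A n) (han n) with hgdef
    have hpt : ∀ f : C₀(ℕ,ℝ), ∃ C, ∀ n, ‖g n f‖ ≤ C := by
      intro f
      obtain ⟨L, hL⟩ := (h f (c0_tendsto f)).2
      obtain ⟨C, hC⟩ := hL.norm.bddAbove_range
      refine ⟨C, fun n => ?_⟩
      rw [hgdef]
      simp only
      rw [rowCLM_apply]
      exact hC ⟨n, rfl⟩
    obtain ⟨C', hC'⟩ := banach_steinhaus hpt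
    refine ⟨C', fun n => ⟨han n, ?_⟩⟩
    refine Summable.tsum_le_of_sum_range_le (han n) (fun K => ?_)
    set xK : ℕ → ℝ := fun k => if k < K then (SignType.sign (A n k) : ℝ) else 0 with hxKdef
    have hxK : Tendsto xK atTop (𝓝 0) := by
      refine Tendsto.congr' ?_ (tendsto_const_nhds (x := (0:ℝ)))
      filter_upwards [eventually_ge_atTop K] with j hj
      simp [hxKdef, Nat.not_lt.2 hj]
    set f : C₀(ℕ,ℝ) := c0Mk xK hxK with hfdef
    have hnorm : ‖f‖ ≤ 1 := by
      rw [← norm_toBCF_eq_norm]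
      refine (BoundedContinuousFunction.norm_le zero_le_one).2 (fun k => ?_)
      show ‖f k‖ ≤ 1
      rw [hfdef, c0Mk_apply, Real.norm_eq_abs, hxKdef]
      by_cases hk : k < K
      · simpa [hk] using abs_sign_le_one (A n k)
      · simp [hk]
    have happ : g n f = ∑ k ∈ Finset.range K, |A n k| := by
      rw [hgdef]
      simp only
      rw [rowCLM_apply]
      rw [tsum_eq_sum (s := Finset.range K) (f := fun k => A n k * f k) ?_]
      · refine Finset.sum_congr rfl (fun k hk => ?_)
        rw [Finset.mem_range] at hk
        rw [hfdef, c0Mk_apply, hxKdef]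
        simp only [hk, if_true]
        exact self_mul_sign (A n k)
      · intro k hk
        rw [Finset.mem_range] at hk
        show A n k * (c0Mk xK hxK) k = 0
        rw [c0Mk_apply, hxKdef]
        simp [hk]
    calc ∑ k ∈ Finset.range K, |A n k| = g n f := happ.symm
      _ ≤ ‖g n f‖ := le_abs_self _
      _ ≤ ‖g n‖ * ‖f‖ := (g n).le_opNorm f
      _ ≤ C' * 1 := mul_le_mul (hC' n) hnorm (norm_nonneg _) ((norm_nonneg _).trans (hC' n))
      _ = C' := mul_one _

lemma backward (A : ℕ → ℕ → ℝ)
    (hcol : ∀ k, ∃ l, Tendsto (fun n => A n k) atTop (𝓝 l))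
    (C : ℝ) (hC : ∀ n, (Summable fun k => |A n k|) ∧ ∑' k, |A n k| ≤ C)
    (x : ℕ → ℝ) (hx : Tendsto x atTop (𝓝 0)) :
    (∀ n, Summable (fun k => A n k * x k)) ∧
      ∃ L, Tendsto (fun n => ∑' k, A n k * x k) atTop (𝓝 L) := by
  choose l hl using hcol
  obtain ⟨M, hM⟩ := hx.norm.bddAbove_range
  have hMb : ∀ k, |x k| ≤ M := fun k => hM ⟨k, rfl⟩
  have hM0 : 0 ≤ M := le_trans (abs_nonneg _) (hMb 0)
  have hCnn : 0 ≤ C := le_trans (tsum_nonneg fun k => abs_nonneg _) (hC 0).2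
  have habs_le : ∀ (a : ℕ → ℝ), (Summable fun k => |a k|) →
      Summable (fun k => a k * x k) := by
    intro a ha
    refine Summable.of_norm_bounded (ha.mul_right M) (fun k => ?_)
    rw [Real.norm_eq_abs, abs_mul]
    exact mul_le_mul_of_nonneg_left (hMb k) (abs_nonneg _)
  have hsum : ∀ n, Summable (fun k => A n k * x k) := fun n => habs_le _ (hC n).1
  -- partial sums of |l| bounded by C
  have hlbound : ∀ K, ∑ k ∈ Finset.range K, |l k| ≤ C := by
    intro K
    have htend : Tendsto (fun n => ∑ k ∈ Finset.range K, |A n k|) atTop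
        (𝓝 (∑ k ∈ Finset.range K, |l k|)) :=
      tendsto_finset_sum _ (fun k _ => (hl k).abs)
    refine le_of_tendsto htend (Eventually.of_forall fun n => ?_)
    exact le_trans (Summable.sum_le_tsum _ (fun k _ => abs_nonneg _) (hC n).1) (hC n).2
  have hlsum : Summable (fun k => |l k|) :=
    summable_of_sum_range_le (fun k => abs_nonneg _) hlbound
  have hltsum : ∑' k, |l k| ≤ C := Summable.tsum_le_of_sum_range_le hlsum hlbound
  have hLsum : Summable (fun k => l k * x k) := habs_le _ hlsum
  refine ⟨hsum, ⟨∑' k, l k * x k, ?_⟩⟩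
  rw [Metric.tendsto_atTop]
  intro ε hε
  have hC1 : (0:ℝ) < C + 1 := by linarith
  set δ : ℝ := ε / (4 * (C + 1)) with hδdef
  have hδpos : 0 < δ := div_pos hε (by linarith)
  obtain ⟨K, hK⟩ := Metric.tendsto_atTop.1 hx δ hδpos
  have hxK : ∀ k, K ≤ k → |x k| ≤ δ := by
    intro k hk
    have := hK k hk
    rw [Real.dist_eq, sub_zero] at this
    exact this.le
  -- head tends to 0
  set hd : ℕ → ℝ := fun n => ∑ k ∈ Finset.range K, |A n k - l k| * |x k| with hhddef
  have hhd0 : Tendsto hd atTop (𝓝 0) := by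
    have : Tendsto hd atTop (𝓝 (∑ k ∈ Finset.range K, |(0:ℝ)| * |x k|)) := by
      refine tendsto_finset_sum _ (fun k _ => Tendsto.mul_const _ ?_)
      have : Tendsto (fun n => A n k - l k) atTop (𝓝 (l k - l k)) :=
        (hl k).sub tendsto_const_nhds
      rw [sub_self] at this
      exact this.abs
    simpa using this
  obtain ⟨N, hN⟩ := Metric.tendsto_atTop.1 hhd0 (ε/2) (half_pos hε)
  refine ⟨N, fun n hn => ?_⟩
  have hdsum : Summable (fun k => |(A n k - l k) * x k|) := by
    refine Summable.of_nonneg_of_le (fun k => abs_nonneg _) (fun k => ?_)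
      (((hC n).1.add hlsum).mul_right M)
    rw [abs_mul]
    refine mul_le_mul (abs_sub _ _) (hMb k) (abs_nonneg _) ?_
    positivity
  have hd' : Summable (fun k => (A n k - l k) * x k) := hdsum.of_abs
  have hsub : (∑' k, A n k * x k) - (∑' k, l k * x k) = ∑' k, (A n k - l k) * x k := by
    rw [← Summable.tsum_sub (hsum n) hLsum]
    exact tsum_congr fun k => by ring
  rw [Real.dist_eq, hsub]
  have step1 : |∑' k, (A n k - l k) * x k| ≤ ∑' k, |(A n k - l k) * x k| := by
    exact norm_tsum_le_tsum_norm (f := fun k => (A n k - l k) * x k)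
      (hdsum.congr fun k => (Real.norm_eq_abs _).symm)
  have hsplit : ∑' k, |(A n k - l k) * x k| =
      (∑ k ∈ Finset.range K, |(A n k - l k) * x k|) +
        ∑' k, |(A n (k + K) - l (k + K)) * x (k + K)| :=
    (Summable.sum_add_tsum_nat_add K hdsum).symm
  have hheadeq : ∑ k ∈ Finset.range K, |(A n k - l k) * x k| = hd n := by
    rw [hhddef]
    exact Finset.sum_congr rfl fun k _ => abs_mul _ _
  -- tail estimate
  have hAshift : Summable (fun k => |A n (k + K)|) :=
    (summable_nat_add_iff K).2 (hC n).1
  have hlshift : Summable (fun k => |l (k + K)|) :=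
    (summable_nat_add_iff K).2 hlsum
  have htail : ∑' k, |(A n (k + K) - l (k + K)) * x (k + K)| ≤
      ((∑' k, |A n (k + K)|) + ∑' k, |l (k + K)|) * δ := by
    rw [← Summable.tsum_add hAshift hlshift, ← tsum_mul_right]
    refine Summable.tsum_le_tsum (fun k => ?_) ((hdsum.comp_injective (add_left_injective K)).congr
      (fun k => rfl)) ((hAshift.add hlshift).mul_right δ)
    rw [abs_mul]
    exact mul_le_mul (abs_sub _ _) (hxK _ (Nat.le_add_left K k)) (abs_nonneg _)
      (by positivity)
  have hAtail : ∑' k, |A n (k + K)| ≤ C := by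
    have := Summable.sum_add_tsum_nat_add (f := fun k => |A n k|) K (hC n).1
    have hnn : 0 ≤ ∑ k ∈ Finset.range K, |A n k| :=
      Finset.sum_nonneg fun k _ => abs_nonneg _
    linarith [(hC n).2]
  have hltail : ∑' k, |l (k + K)| ≤ C := by
    have := Summable.sum_add_tsum_nat_add (f := fun k => |l k|) K hlsum
    have hnn : 0 ≤ ∑ k ∈ Finset.range K, |l k| :=
      Finset.sum_nonneg fun k _ => abs_nonneg _
    linarith
  have htail2 : ((∑' k, |A n (k + K)|) + ∑' k, |l (k + K)|) * δ ≤ ε / 2 := by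
    have h1 : ((∑' k, |A n (k + K)|) + ∑' k, |l (k + K)|) * δ ≤ (2 * (C + 1)) * δ := by
      refine mul_le_mul_of_nonneg_right ?_ hδpos.le
      linarith
    have h2 : (2 * (C + 1)) * δ = ε / 2 := by
      rw [hδdef]
      field_simp
      ring
    linarith
  have hhead : hd n < ε / 2 := by
    have := hN n hn
    rw [Real.dist_eq, sub_zero] at this
    exact lt_of_abs_lt this
  calc |∑' k, (A n k - l k) * x k| ≤ ∑' k, |(A n k - l k) * x k| := step1
    _ = hd n + ∑' k, |(A n (k + K) - l (k + K)) * x (k + K)| := by rw [hsplit, hheadeq]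
    _ < ε / 2 + ε / 2 := by
        have := le_trans htail htail2
        linarith
    _ = ε := add_halves ε

/-- A matrix maps `c₀` into `c` iff the columns converge and the rows have
uniformly bounded `ℓ₁`-norms. -/
theorem matrix_c0_to_c (A : ℕ → ℕ → ℝ) :
    (∀ x : ℕ → ℝ, Tendsto x atTop (𝓝 0) →
      (∀ n, Summable (fun k => A n k * x k)) ∧
      ∃ L, Tendsto (fun n => ∑' k, A n k * x k) atTop (𝓝 L)) ↔
    ((∀ k, ∃ l, Tendsto (fun n => A n k) atTop (𝓝 l)) ∧
      ∃ C : ℝ, ∀ n, (Summable fun k => |A n k|) ∧ ∑' k, |A n k| ≤ C) := by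
  constructor
  · exact forward A
  · rintro ⟨hcol, C, hC⟩ x hx
    exact backward A hcol C hC x hx
end

section
/- An infinite matrix A = (a_{nk}) maps c into c if and only if: (i) lim_{n→∞} a_{nk} = α_k exists for each fixed k, (ii) sup_n Σ_k |a_{nk}| < ∞, and (iii) lim_{n→∞} Σ_k a_{nk} exists. -/
open Filter Topology ZeroAtInfty


lemma abs_summable_of_mul (a : ℕ → ℝ)
    (h : ∀ x : ℕ → ℝ, Tendsto x atTop (𝓝 (0:ℝ)) → Summable (fun k => a k * x k)) :
    Summable fun k => |a k| := by
  by_contra hns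
  set S : ℕ → ℝ := fun K => ∑ j ∈ Finset.range K, |a j| with hSdef
  have hSnn : ∀ K, 0 ≤ S K := fun K => Finset.sum_nonneg fun j _ => abs_nonneg _
  have hpos : ∀ K, (0:ℝ) < 1 + S K := fun K => by linarith [hSnn K]
  have hStop : Tendsto S atTop atTop :=
    (not_summable_iff_tendsto_nat_atTop_of_nonneg (fun n => abs_nonneg _)).1 hns
  have h1S : Tendsto (fun k => 1 + S k) atTop atTop :=
    tendsto_atTop_add_const_left _ _ hStop
  set x : ℕ → ℝ := fun k => (if a k < 0 then -1 else 1) / (1 + S k) with hxdef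
  have hx0 : Tendsto x atTop (𝓝 0) := by
    apply squeeze_zero_norm (a := fun k => (1 + S k)⁻¹)
    · intro k
      have h1 : ‖x k‖ = |(if a k < 0 then (-1:ℝ) else 1)| / |1 + S k| := by
        rw [hxdef]; simp [abs_div]
      rw [h1, abs_of_pos (hpos _)]
      split_ifs <;> simp [one_div]
    · exact h1S.inv_tendsto_atTop
  have hsum := h x hx0
  have hterm : ∀ k, a k * x k = |a k| / (1 + S k) := by
    intro k
    simp only [hxdef]
    rcases lt_or_ge (a k) 0 with hk | hk
    · rw [if_pos hk, abs_of_neg hk]; ring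
    · rw [if_neg (not_lt.2 hk), abs_of_nonneg hk]; ring
  have hsum' : Summable (fun k => |a k| / (1 + S k)) := by
    simpa [hterm] using hsum
  have hlog : ∀ K, Real.log (1 + S K) ≤ ∑ k ∈ Finset.range K, |a k| / (1 + S k) := by
    intro K
    have key : ∀ k, Real.log (1 + S (k+1)) - Real.log (1 + S k) ≤ |a k| / (1 + S k) := by
      intro k
      have hS1 : S (k+1) = S k + |a k| := Finset.sum_range_succ _ _
      have ht : (0:ℝ) < (1 + S (k+1)) / (1 + S k) := div_pos (hpos _) (hpos _)
      have h2 := Real.log_le_sub_one_of_pos ht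
      rw [Real.log_div (ne_of_gt (hpos _)) (ne_of_gt (hpos _))] at h2
      have heq : (1 + S (k+1)) / (1 + S k) - 1 = |a k| / (1 + S k) := by
        have := hpos k
        field_simp
        linarith [hS1]
      linarith [heq ▸ h2]
    calc Real.log (1 + S K) = ∑ k ∈ Finset.range K,
          (Real.log (1 + S (k+1)) - Real.log (1 + S k)) := by
          rw [Finset.sum_range_sub (fun k => Real.log (1 + S k))]
          simp [hSdef]
      _ ≤ _ := Finset.sum_le_sum fun k _ => key k
  have hbdd : ∀ K, Real.log (1 + S K) ≤ ∑' k, |a k| / (1 + S k) :=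
    fun K => (hlog K).trans (Summable.sum_le_tsum _ (fun k _ => div_nonneg (abs_nonneg _) (hpos _).le) hsum')
  have htop : Tendsto (fun K => Real.log (1 + S K)) atTop atTop :=
    Real.tendsto_log_atTop.comp h1S
  obtain ⟨K, hK⟩ := (htop.eventually_gt_atTop (∑' k, |a k| / (1 + S k))).exists
  exact absurd (hbdd K) (not_le.2 hK)


lemma nat_cocompact : (cocompact ℕ) = atTop := by
  rw [cocompact_eq_cofinite, Nat.cofinite_eq_atTop]

lemma uniform_bound (A : ℕ → ℕ → ℝ)
    (habs : ∀ n, Summable fun k => |A n k|)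
    (h : ∀ x : ℕ → ℝ, Tendsto x atTop (𝓝 (0:ℝ)) →
        ∃ L, Tendsto (fun n => ∑' k, A n k * x k) atTop (𝓝 L)) :
    ∃ C, ∀ n, ∑' k, |A n k| ≤ C := by
  have hcoe : ∀ (x : C₀(ℕ, ℝ)) (k : ℕ), |x k| ≤ ‖x‖ := by
    intro x k
    rw [← ZeroAtInftyContinuousMap.norm_toBCF_eq_norm]
    exact x.toBCF.norm_coe_le_norm k
  have hsx : ∀ (n : ℕ) (x : C₀(ℕ, ℝ)), Summable fun k => A n k * x k := by
    intro n x
    refine Summable.of_norm_bounded ((habs n).mul_right ‖x‖) fun k => ?_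
    rw [Real.norm_eq_abs, abs_mul]
    exact mul_le_mul_of_nonneg_left (hcoe x k) (abs_nonneg _)
  set f : ℕ → C₀(ℕ, ℝ) →L[ℝ] ℝ := fun n =>
    LinearMap.mkContinuous
      { toFun := fun x => ∑' k, A n k * x k
        map_add' := by
          intro x y
          show (∑' k, A n k * (x + y) k) = (∑' k, A n k * x k) + ∑' k, A n k * y k
          rw [← Summable.tsum_add (hsx n x) (hsx n y)]
          exact tsum_congr fun k => by simp [mul_add]
        map_smul' := by
          intro c x
          simp only [RingHom.id_apply, smul_eq_mul, ← tsum_mul_left]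
          congr 1; funext k
          show A n k * ((c • x) k) = c * (A n k * x k)
          rw [ZeroAtInftyContinuousMap.coe_smul]
          simp only [Pi.smul_apply, smul_eq_mul]; ring }
      (∑' k, |A n k|)
      (by
        intro x
        simp only [LinearMap.coe_mk, AddHom.coe_mk]
        calc ‖∑' k, A n k * x k‖ ≤ ∑' k, ‖A n k * x k‖ :=
              norm_tsum_le_tsum_norm (by
                refine Summable.of_nonneg_of_le (fun k => norm_nonneg _) (fun k => ?_)
                  ((habs n).mul_right ‖x‖)
                rw [Real.norm_eq_abs, abs_mul]
                exact mul_le_mul_of_nonneg_left (hcoe x k) (abs_nonneg _))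
          _ ≤ ∑' k, |A n k| * ‖x‖ := by
              refine Summable.tsum_le_tsum (fun k => ?_) (by
                refine Summable.of_nonneg_of_le (fun k => norm_nonneg _) (fun k => ?_)
                  ((habs n).mul_right ‖x‖)
                rw [Real.norm_eq_abs, abs_mul]
                exact mul_le_mul_of_nonneg_left (hcoe x k) (abs_nonneg _))
                ((habs n).mul_right ‖x‖)
              rw [Real.norm_eq_abs, abs_mul]
              exact mul_le_mul_of_nonneg_left (hcoe x k) (abs_nonneg _)
          _ = (∑' k, |A n k|) * ‖x‖ := tsum_mul_right) with hfdef
  have hpt : ∀ x : C₀(ℕ, ℝ), ∃ C, ∀ n, ‖f n x‖ ≤ C := by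
    intro x
    have hx0 : Tendsto (⇑x) atTop (𝓝 (0:ℝ)) := by
      have := x.zero_at_infty'
      rwa [nat_cocompact] at this
    obtain ⟨L, hL⟩ := h (⇑x) hx0
    have : Tendsto (fun n => ‖f n x‖) atTop (𝓝 ‖L‖) := hL.norm
    obtain ⟨C, hC⟩ := this.bddAbove_range
    exact ⟨C, fun n => hC (Set.mem_range_self n)⟩
  obtain ⟨C', hC'⟩ := banach_steinhaus hpt
  refine ⟨C', fun n => ?_⟩
  refine Summable.tsum_le_of_sum_range_le (habs n) fun K => ?_
  set y : C₀(ℕ, ℝ) :=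
    ⟨⟨fun k => if k < K then (if A n k < 0 then -1 else 1) else 0,
        continuous_of_discreteTopology⟩, by
      show Tendsto (fun k => if k < K then (if A n k < 0 then (-1:ℝ) else 1) else 0) (cocompact ℕ) (𝓝 0)
      rw [nat_cocompact]
      refine Tendsto.congr' ?_ tendsto_const_nhds
      filter_upwards [eventually_ge_atTop K] with k hk
      rw [if_neg (not_lt.2 hk)]⟩ with hydef
  have hynorm : ‖y‖ ≤ 1 := by
    rw [← ZeroAtInftyContinuousMap.norm_toBCF_eq_norm]
    refine BoundedContinuousFunction.norm_le (by norm_num) |>.2 fun k => ?_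
    show ‖(if k < K then (if A n k < 0 then -1 else 1) else (0:ℝ))‖ ≤ 1
    split_ifs <;> norm_num
  have hval : f n y = ∑ k ∈ Finset.range K, |A n k| := by
    show (∑' k, A n k * y k) = _
    rw [tsum_eq_sum (s := Finset.range K) (fun k hk => by
      have : ¬ k < K := fun hlt => hk (Finset.mem_range.2 hlt)
      show A n k * (if k < K then _ else (0:ℝ)) = 0
      rw [if_neg this, mul_zero])]
    refine Finset.sum_congr rfl fun k hk => ?_
    have hkK : k < K := Finset.mem_range.1 hk
    show A n k * (if k < K then (if A n k < 0 then -1 else 1) else (0:ℝ)) = |A n k|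
    rw [if_pos hkK]
    rcases lt_or_ge (A n k) 0 with h0 | h0
    · rw [if_pos h0, abs_of_neg h0]; ring
    · rw [if_neg (not_lt.2 h0), abs_of_nonneg h0]; ring
  calc ∑ k ∈ Finset.range K, |A n k| = f n y := hval.symm
    _ ≤ ‖f n y‖ := le_abs_self _
    _ ≤ ‖f n‖ * ‖y‖ := (f n).le_opNorm y
    _ ≤ C' * 1 := mul_le_mul (hC' n) hynorm (norm_nonneg _)
        ((norm_nonneg (f n)).trans (hC' n))
    _ = C' := mul_one _


lemma key_tendsto (A : ℕ → ℕ → ℝ) (α : ℕ → ℝ) (y : ℕ → ℝ) (C M : ℝ)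
    (habs : ∀ n, Summable fun k => |A n k|) (hCb : ∀ n, ∑' k, |A n k| ≤ C)
    (hα : ∀ k, Tendsto (fun n => A n k) atTop (𝓝 (α k)))
    (hαabs : Summable fun k => |α k|) (hαb : ∑' k, |α k| ≤ C)
    (hy : Tendsto y atTop (𝓝 0)) (hyb : ∀ k, |y k| ≤ M) :
    Tendsto (fun n => ∑' k, A n k * y k) atTop (𝓝 (∑' k, α k * y k)) := by
  have hMnn : 0 ≤ M := (abs_nonneg _).trans (hyb 0)
  have hCnn : 0 ≤ C := le_trans (tsum_nonneg fun k => abs_nonneg _) (hCb 0)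
  have hys : ∀ n, Summable fun k => A n k * y k := fun n => by
    refine Summable.of_norm_bounded ((habs n).mul_right M) fun k => ?_
    rw [Real.norm_eq_abs, abs_mul]
    exact mul_le_mul_of_nonneg_left (hyb k) (abs_nonneg _)
  have hαys : Summable fun k => α k * y k := by
    refine Summable.of_norm_bounded (hαabs.mul_right M) fun k => ?_
    rw [Real.norm_eq_abs, abs_mul]
    exact mul_le_mul_of_nonneg_left (hyb k) (abs_nonneg _)
  rw [Metric.tendsto_atTop]
  intro ε hε
  set ε' : ℝ := ε / (4 * (C + 1)) with hε'def
  have hε' : 0 < ε' := div_pos hε (by linarith)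
  obtain ⟨K, hK⟩ := (Metric.tendsto_atTop.1 hy ε' hε')
  have hyK : ∀ k, K ≤ k → |y k| ≤ ε' := fun k hk => by
    have := hK k hk; rw [Real.dist_eq, sub_zero] at this; exact this.le
  have hfin : Tendsto (fun n => ∑ k ∈ Finset.range K, A n k * y k) atTop
      (𝓝 (∑ k ∈ Finset.range K, α k * y k)) :=
    tendsto_finset_sum _ fun k _ => (hα k).mul_const _
  obtain ⟨N, hN⟩ := Metric.tendsto_atTop.1 hfin (ε / 2) (by linarith)
  refine ⟨N, fun n hn => ?_⟩
  have hsplitn : (∑ k ∈ Finset.range K, A n k * y k) + (∑' k, A n (k + K) * y (k + K))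
      = ∑' k, A n k * y k := Summable.sum_add_tsum_nat_add K (hys n)
  have hsplitα : (∑ k ∈ Finset.range K, α k * y k) + (∑' k, α (k + K) * y (k + K))
      = ∑' k, α k * y k := Summable.sum_add_tsum_nat_add K hαys
  have htailshift : ∀ (a : ℕ → ℝ), (Summable fun k => |a k|) → (∑' k, |a k| ≤ C) →
      |∑' k, a (k + K) * y (k + K)| ≤ C * ε' := by
    intro a ha haC
    have hshift : Summable fun k => |a (k + K)| := (summable_nat_add_iff K).2 ha
    have hsum : Summable fun k => a (k + K) * y (k + K) := by
      refine Summable.of_norm_bounded (hshift.mul_right M) fun k => ?_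
      rw [Real.norm_eq_abs, abs_mul]
      exact mul_le_mul_of_nonneg_left (hyb _) (abs_nonneg _)
    have hns : Summable fun k => ‖a (k + K) * y (k + K)‖ := by
      simpa only [Real.norm_eq_abs] using hsum.abs
    calc |∑' k, a (k + K) * y (k + K)| ≤ ∑' k, |a (k + K) * y (k + K)| := by
          have := norm_tsum_le_tsum_norm hns
          simpa only [Real.norm_eq_abs] using this
      _ ≤ ∑' k, |a (k + K)| * ε' := by
          refine Summable.tsum_le_tsum (fun k => ?_) hsum.abs (hshift.mul_right ε')
          rw [abs_mul]
          exact mul_le_mul_of_nonneg_left (hyK _ (Nat.le_add_left K k)) (abs_nonneg _)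
      _ = (∑' k, |a (k + K)|) * ε' := tsum_mul_right
      _ ≤ C * ε' := by
          refine mul_le_mul_of_nonneg_right ?_ hε'.le
          have := Summable.sum_add_tsum_nat_add (f := fun k => |a k|) K ha
          have hnn : 0 ≤ ∑ k ∈ Finset.range K, |a k| :=
            Finset.sum_nonneg fun k _ => abs_nonneg _
          linarith [haC]
  have h1 := htailshift (A n) (habs n) (hCb n)
  have h2 := htailshift α hαabs hαb
  have hfd := hN n hn
  rw [Real.dist_eq] at hfd ⊢
  have hCε : C * ε' ≤ ε / 4 := by
    have h1 : C * ε' ≤ (C + 1) * ε' := by nlinarith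
    have h2 : (C + 1) * ε' = ε / 4 := by
      rw [hε'def]; field_simp
    linarith
  calc |(∑' k, A n k * y k) - ∑' k, α k * y k|
      = |((∑ k ∈ Finset.range K, A n k * y k) - ∑ k ∈ Finset.range K, α k * y k)
        + ((∑' k, A n (k + K) * y (k + K)) - ∑' k, α (k + K) * y (k + K))| := by
        rw [← hsplitn, ← hsplitα]; congr 1; ring
    _ ≤ |(∑ k ∈ Finset.range K, A n k * y k) - ∑ k ∈ Finset.range K, α k * y k|
        + |(∑' k, A n (k + K) * y (k + K)) - ∑' k, α (k + K) * y (k + K)| := abs_add_le _ _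
    _ ≤ |(∑ k ∈ Finset.range K, A n k * y k) - ∑ k ∈ Finset.range K, α k * y k|
        + (|∑' k, A n (k + K) * y (k + K)| + |∑' k, α (k + K) * y (k + K)|) := by
        gcongr; exact abs_sub _ _
    _ < ε / 2 + (ε / 4 + ε / 4) :=
        add_lt_add_of_lt_of_le hfd (add_le_add (h1.trans hCε) (h2.trans hCε))
    _ = ε := by ring


/-- Kojima–Schur: a matrix maps `c` into `c` iff the columns converge, the rows
have uniformly bounded `ℓ₁`-norms, and the row sums converge. -/
theorem matrix_c_to_c (A : ℕ → ℕ → ℝ) :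
    (∀ x : ℕ → ℝ, (∃ l, Tendsto x atTop (𝓝 l)) →
      (∀ n, Summable (fun k => A n k * x k)) ∧
      ∃ L, Tendsto (fun n => ∑' k, A n k * x k) atTop (𝓝 L)) ↔
    ((∀ k, ∃ l, Tendsto (fun n => A n k) atTop (𝓝 l)) ∧
      (∃ C : ℝ, ∀ n, (Summable fun k => |A n k|) ∧ ∑' k, |A n k| ≤ C) ∧
      ∃ L, Tendsto (fun n => ∑' k, A n k) atTop (𝓝 L)) := by
  constructor
  · intro h
    have habs : ∀ n, Summable fun k => |A n k| := fun n =>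
      abs_summable_of_mul (A n) (fun x hx => (h x ⟨0, hx⟩).1 n)
    refine ⟨?_, ?_, ?_⟩
    · intro k
      set x : ℕ → ℝ := fun j => if j = k then 1 else 0 with hxdef
      have hx : Tendsto x atTop (𝓝 (0:ℝ)) := by
        refine Tendsto.congr' ?_ tendsto_const_nhds
        filter_upwards [eventually_ge_atTop (k+1)] with j hj
        rw [hxdef]; simp only
        rw [if_neg (by omega)]
      obtain ⟨L, hL⟩ := (h x ⟨0, hx⟩).2
      refine ⟨L, ?_⟩
      have heq : ∀ n, (∑' j, A n j * x j) = A n k := by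
        intro n
        rw [tsum_eq_single k (fun j hj => by rw [hxdef]; simp only; rw [if_neg hj, mul_zero])]
        rw [hxdef]; simp
      exact (funext heq : (fun n => ∑' j, A n j * x j) = fun n => A n k) ▸ hL
    · obtain ⟨C, hC⟩ := uniform_bound A habs (fun x hx => (h x ⟨0, hx⟩).2)
      exact ⟨C, fun n => ⟨habs n, hC n⟩⟩
    · obtain ⟨L, hL⟩ := (h (fun _ => 1) ⟨1, tendsto_const_nhds⟩).2
      exact ⟨L, by simpa using hL⟩
  · rintro ⟨hcol, ⟨C, hC⟩, s, hs⟩ x ⟨l, hl⟩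
    have habs : ∀ n, Summable fun k => |A n k| := fun n => (hC n).1
    obtain ⟨M, hM⟩ := hl.abs.bddAbove_range
    have hMk : ∀ k, |x k| ≤ M := fun k => hM (Set.mem_range_self k)
    have hxs : ∀ n, Summable fun k => A n k * x k := by
      intro n
      refine Summable.of_norm_bounded ((habs n).mul_right M) fun k => ?_
      rw [Real.norm_eq_abs, abs_mul]
      exact mul_le_mul_of_nonneg_left (hMk k) (abs_nonneg _)
    refine ⟨hxs, ?_⟩
    set α : ℕ → ℝ := fun k => (hcol k).choose with hαdef
    have hα : ∀ k, Tendsto (fun n => A n k) atTop (𝓝 (α k)) := fun k => (hcol k).choose_spec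
    have hfinb : ∀ K, ∑ k ∈ Finset.range K, |α k| ≤ C := by
      intro K
      refine le_of_tendsto (tendsto_finset_sum (Finset.range K) fun k _ => (hα k).abs)
        (Eventually.of_forall fun n => ?_)
      exact (Summable.sum_le_tsum (Finset.range K) (fun k _ => abs_nonneg _) (habs n)).trans (hC n).2
    have hαabs : Summable fun k => |α k| :=
      summable_of_sum_range_le (fun k => abs_nonneg _) hfinb
    have hαb : ∑' k, |α k| ≤ C := Summable.tsum_le_of_sum_range_le hαabs hfinb
    set y : ℕ → ℝ := fun k => x k - l with hydef
    have hy : Tendsto y atTop (𝓝 (0:ℝ)) := by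
      have := hl.sub_const l
      simpa [hydef] using this
    have hyb : ∀ k, |y k| ≤ M + |l| := by
      intro k
      have h1 : |x k - l| ≤ |x k| + |l| := by
        have := abs_add_le (x k) (-l)
        simpa [sub_eq_add_neg] using this
      exact h1.trans (by linarith [hMk k])
    have key := key_tendsto A α y C (M + |l|) habs (fun n => (hC n).2) hα hαabs hαb hy hyb
    have hAsum : ∀ n, Summable (fun k => A n k) := fun n => (habs n).of_abs
    have hys : ∀ n, Summable fun k => A n k * y k := by
      intro n
      refine Summable.of_norm_bounded ((habs n).mul_right (M + |l|)) fun k => ?_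
      rw [Real.norm_eq_abs, abs_mul]
      exact mul_le_mul_of_nonneg_left (hyb k) (abs_nonneg _)
    have heq : ∀ n, (∑' k, A n k * x k) = (∑' k, A n k * y k) + (∑' k, A n k) * l := by
      intro n
      rw [← tsum_mul_right, ← Summable.tsum_add (hys n) ((hAsum n).mul_right l)]
      refine tsum_congr fun k => ?_
      rw [hydef]; ring
    refine ⟨(∑' k, α k * y k) + s * l, ?_⟩
    rw [show (fun n => ∑' k, A n k * x k)
        = fun n => (∑' k, A n k * y k) + (∑' k, A n k) * l from funext heq]
    exact key.add (hs.mul_const l)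
end

section
/- Let α be a proper fraction, u a sequence of nonzero scalars, μ ∈ {c₀, c}, λ any sequence space, and A = (a_{nk}) an infinite matrix. Define B = (b_{nk}) by b_{nk} = Σ_{j=0}^{n} (Σ_{i=0}^{n-j} (-1)^i [Γ(α+1)/(i!·Γ(α+1-i))] u_{i+j}) a_{jk}. Then A maps λ into μ(Γ, Δ^{(α)}, u) if and only if B maps λ into μ. -/
open Finset Filter Topology

/-- auxiliary coefficient -/
noncomputable def ccAux (α : ℝ) (u : ℕ → ℝ) (n j : ℕ) : ℝ :=
  ∑ i ∈ Finset.range (n - j + 1), fracCoeff α i * u (i + j)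

lemma fracCoeff_zero_s19 (α : ℝ) (hα : 0 < α) : fracCoeff α 0 = 1 := by
  have h : Real.Gamma (α + 1) ≠ 0 :=
    ne_of_gt (Real.Gamma_pos_of_pos (by linarith))
  simp [fracCoeff, h]

lemma gamma_eq (α : ℝ) (u x : ℕ → ℝ) (n : ℕ) :
    gammaTransform α u x n = ∑ j ∈ Finset.range (n + 1), ccAux α u n j * x j := by
  unfold gammaTransform fracDiff ccAux
  -- rewrite each inner sum by reflection: i ↦ j - i
  have h1 : ∀ j : ℕ, (∑ i ∈ Finset.range (j + 1), fracCoeff α i * x (j - i))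
      = ∑ k ∈ Finset.range (j + 1), fracCoeff α (j - k) * x k := by
    intro j
    rw [← Finset.sum_range_reflect (fun i => fracCoeff α i * x (j - i)) (j + 1)]
    apply Finset.sum_congr rfl
    intro k hk
    simp only [Finset.mem_range] at hk
    congr 2 <;> omega
  simp only [h1, Finset.mul_sum]
  -- swap the double sum
  have h2 := Finset.sum_Ico_Ico_comm 0 (n + 1)
    (fun k j => u j * (fracCoeff α (j - k) * x k))
  simp only [← Nat.Ico_zero_eq_range]
  rw [← h2]
  apply Finset.sum_congr rfl
  intro k hk
  simp only [Finset.mem_Ico] at hk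
  rw [Finset.sum_Ico_eq_sum_range, Finset.sum_mul]
  have : n + 1 - k = n - k + 1 := by omega
  rw [this, Nat.Ico_zero_eq_range]
  apply Finset.sum_congr rfl
  intro i hi
  have h3 : k + i - k = i := by omega
  rw [h3, Nat.add_comm k i]
  ring

theorem matrix_into_gamma_space (α : ℝ) (hα : 0 < α) (hα1 : α < 1)
    (u : ℕ → ℝ) (hu : ∀ k, u k ≠ 0)
    (μ : Set (ℕ → ℝ))
    (hμ : μ = {y | Tendsto y atTop (𝓝 0)} ∨ μ = {y | ∃ L, Tendsto y atTop (𝓝 L)})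
    (Λ : Set (ℕ → ℝ))
    (A B : ℕ → ℕ → ℝ)
    (hB : ∀ n k, B n k = ∑ j ∈ Finset.range (n + 1),
      (∑ i ∈ Finset.range (n - j + 1), fracCoeff α i * u (i + j)) * A j k) :
    (∀ z ∈ Λ, (∀ n, Summable fun k => A n k * z k) ∧
      gammaTransform α u (fun n => ∑' k, A n k * z k) ∈ μ) ↔
    (∀ z ∈ Λ, (∀ n, Summable fun k => B n k * z k) ∧
      (fun n => ∑' k, B n k * z k) ∈ μ) := by
  have hB' : ∀ n k, B n k = ∑ j ∈ Finset.range (n + 1), ccAux α u n j * A j k := hB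
  have hcc : ∀ n, ccAux α u n n = u n := by
    intro n
    simp [ccAux, fracCoeff_zero_s19 α hα]
  -- key pointwise identity assuming summability of rows of A
  have key : ∀ z : ℕ → ℝ, (∀ n, Summable fun k => A n k * z k) →
      ∀ n, ((Summable fun k => B n k * z k) ∧
        ∑' k, B n k * z k = gammaTransform α u (fun m => ∑' k, A m k * z k) n) := by
    intro z hA n
    have hfun : ∀ k, B n k * z k
        = ∑ j ∈ Finset.range (n + 1), ccAux α u n j * (A j k * z k) := by
      intro k
      rw [hB' n k, Finset.sum_mul]
      exact Finset.sum_congr rfl fun j _ => by ring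
    have hS : Summable fun k => B n k * z k := by
      rw [show (fun k => B n k * z k)
          = fun k => ∑ j ∈ Finset.range (n + 1), ccAux α u n j * (A j k * z k)
          from funext hfun]
      exact summable_sum fun j _ => (hA j).mul_left _
    refine ⟨hS, ?_⟩
    calc ∑' k, B n k * z k
        = ∑' k, ∑ j ∈ Finset.range (n + 1), ccAux α u n j * (A j k * z k) := by
          exact tsum_congr hfun
      _ = ∑ j ∈ Finset.range (n + 1), ∑' k, ccAux α u n j * (A j k * z k) :=
          Summable.tsum_finsetSum fun j _ => ((hA j).mul_left _)
      _ = ∑ j ∈ Finset.range (n + 1), ccAux α u n j * ∑' k, A j k * z k := by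
          exact Finset.sum_congr rfl fun j _ => ((hA j).tsum_mul_left _)
      _ = gammaTransform α u (fun m => ∑' k, A m k * z k) n := (gamma_eq α u _ n).symm
  -- reverse: summability of B rows gives summability of A rows
  have rev : ∀ z : ℕ → ℝ, (∀ n, Summable fun k => B n k * z k) →
      ∀ n, Summable fun k => A n k * z k := by
    intro z hBs n
    induction n using Nat.strong_induction_on with
    | _ n ih =>
      have hfun : ∀ k, A n k * z k
          = (u n)⁻¹ * (B n k * z k - ∑ j ∈ Finset.range n, ccAux α u n j * (A j k * z k)) := by
        intro k
        have hb := hB' n k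
        rw [Finset.sum_range_succ, hcc n] at hb
        rw [hb, add_mul, Finset.sum_mul]
        simp only [mul_assoc]
        rw [add_sub_cancel_left, inv_mul_cancel_left₀ (hu n)]
      rw [show (fun k => A n k * z k)
          = fun k => (u n)⁻¹ * (B n k * z k - ∑ j ∈ Finset.range n, ccAux α u n j * (A j k * z k))
          from funext hfun]
      exact (((hBs n).sub (summable_sum fun j hj =>
        (ih j (Finset.mem_range.mp hj)).mul_left _))).mul_left _
  constructor
  · intro h z hz
    obtain ⟨hA, hm⟩ := h z hz
    have hk := key z hA
    refine ⟨fun n => (hk n).1, ?_⟩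
    have : (fun n => ∑' k, B n k * z k)
        = gammaTransform α u (fun m => ∑' k, A m k * z k) := funext fun n => (hk n).2
    rw [this]; exact hm
  · intro h z hz
    obtain ⟨hBs, hm⟩ := h z hz
    have hA := rev z hBs
    have hk := key z hA
    refine ⟨hA, ?_⟩
    have : (fun n => ∑' k, B n k * z k)
        = gammaTransform α u (fun m => ∑' k, A m k * z k) := funext fun n => (hk n).2
    rw [← this]; exact hm
end
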